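/- Let K be a field, Q a labelled quiver with vertices V, and (𝒱, φ) a representation of Q consistent with the labelling. Let u, v, w ∈ V. Then for all f ∈ K⟨X⟩_{v,w} and g ∈ K⟨X⟩_{u,v}, the product fg lies in K⟨X⟩_{u,w} and φ_{u,w}(fg) = φ_{v,w}(f) ∘ φ_{u,v}(g) as K-linear maps from 𝒱_u to 𝒱_w. -/

import Mathlib

open scoped BigOperators

/-- The free `R`-algebra `R⟨X⟩` on `X`, as the monoid algebra over `R`
of the free monoid `⟨X⟩` of words over `X`. -/
abbrev FreeAlg (R X : Type*) [CommRing R] := MonoidAlgebra R (FreeMonoid X)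

/-- A labelled quiver `Q = (V, E, X, s, t, l)`: a directed multigraph with vertex set `V`,
edge set `E`, source and target maps `s, t : E → V` and labelling `l : E → X`. -/
structure LabelledQuiver (V E X : Type*) where
  src : E → V
  tgt : E → V
  lab : E → X

/-- Paths in a labelled quiver `Q`; `LQPath Q u w` is the type of paths with source `u` and
target `w`.  `nil v` is the empty path at `v`; `cons e p` appends the edge `e` after `p`. -/
inductive LQPath {V E X : Type*} (Q : LabelledQuiver V E X) : V → V → Type _ where
  | nil (v : V) : LQPath Q v v
  | cons {u : V} (e : E) (p : LQPath Q u (Q.src e)) : LQPath Q u (Q.tgt e)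

namespace LQPath
variable {V E X : Type*} {Q : LabelledQuiver V E X}
/-- The label `l(p) = l(eₙ)⋯l(e₁) ∈ ⟨X⟩` of a path; the empty path has label `1`. -/
def label : {u w : V} → LQPath Q u w → FreeMonoid X
  | _, _, .nil _ => 1
  | _, _, .cons e p => FreeMonoid.of (Q.lab e) * p.label
end LQPath

namespace LabelledQuiver

variable {V E X : Type*} (Q : LabelledQuiver V E X)

/-- The set of signatures `σ(m) = {(s(p), t(p)) : p a path in Q with l(p) = m}`. -/
def sigmaM (m : FreeMonoid X) : Set (V × V) :=
  {vw | ∃ p : LQPath Q vw.1 vw.2, p.label = m}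

variable {R : Type*} [CommRing R]

/-- The set of signatures `σ(f) = ⋂_{m ∈ supp(f)} σ(m)` of a polynomial. -/
def sigmaP (f : FreeAlg R X) : Set (V × V) :=
  ⋂ m ∈ (f.coeff : FreeMonoid X →₀ R).support, Q.sigmaM m

/-- `f` is compatible with `Q` if `σ(f) ≠ ∅`. -/
def Compatible (f : FreeAlg R X) : Prop :=
  (Q.sigmaP f).Nonempty

/-- `f` is uniformly compatible with `Q` if it is compatible and all monomials in its
support have the same set of signatures. -/
def UniformlyCompatible (f : FreeAlg R X) : Prop :=
  Q.Compatible f ∧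
    ∀ m ∈ (f.coeff : FreeMonoid X →₀ R).support, ∀ m' ∈ (f.coeff : FreeMonoid X →₀ R).support,
      Q.sigmaM m = Q.sigmaM m'

/-- The set of sources `s(f)` of a polynomial: the projection of `σ(f)` to the first
component. -/
def srcSet (f : FreeAlg R X) : Set V := Prod.fst '' Q.sigmaP f

/-- The set of targets `t(f)` of a polynomial: the projection of `σ(f)` to the second
component. -/
def tgtSet (f : FreeAlg R X) : Set V := Prod.snd '' Q.sigmaP f

end LabelledQuiver

/-- A representation `(𝒱, φ)` of a labelled quiver `Q` by `K`-vector spaces: a vector space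
`𝒱_v` for each vertex `v` and a `K`-linear map `φ(e) : 𝒱_{s(e)} → 𝒱_{t(e)}` for each edge. -/
structure QuiverRep (K : Type*) [Field K] {V E X : Type*} (Q : LabelledQuiver V E X) where
  space : V → Type*
  [addCommGroup : ∀ v, AddCommGroup (space v)]
  [module : ∀ v, Module K (space v)]
  map : (e : E) → space (Q.src e) →ₗ[K] space (Q.tgt e)

attribute [instance] QuiverRep.addCommGroup QuiverRep.module

namespace QuiverRep

variable {K : Type*} [Field K] {V E X : Type*} {Q : LabelledQuiver V E X}

/-- The linear map `φ(eₙ)⋯φ(e₁)` induced by a path; the empty path induces the identity. -/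
def pathMap (ρ : QuiverRep K Q) : {u w : V} → LQPath Q u w → (ρ.space u →ₗ[K] ρ.space w)
  | _, _, .nil _ => LinearMap.id
  | _, _, .cons e p => (ρ.map e).comp (ρ.pathMap p)

/-- A representation is consistent with the labelling if any two paths with the same source,
the same target and the same label induce the same linear map. -/
def Consistent (ρ : QuiverRep K Q) : Prop :=
  ∀ (u w : V) (p q : LQPath Q u w), p.label = q.label → ρ.pathMap p = ρ.pathMap q

/-- The realization `φ_{v,w}(f)` of a polynomial `f` w.r.t. a representation: the `K`-linear
extension of the assignment sending the label of a path from `v` to `w` to the composition of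
the linear maps along the path (an arbitrary such path is chosen for each monomial; for a
consistent representation the result does not depend on this choice). -/
noncomputable def realize (ρ : QuiverRep K Q) (v w : V) (f : FreeAlg K X) :
    ρ.space v →ₗ[K] ρ.space w :=
  Finsupp.sum (f.coeff : FreeMonoid X →₀ K) fun m c =>
    letI := Classical.propDecidable (∃ p : LQPath Q v w, p.label = m)
    c • (if h : ∃ p : LQPath Q v w, p.label = m then ρ.pathMap h.choose else 0)

end QuiverRep


namespace LQPath
variable {V E X : Type*} {Q : LabelledQuiver V E X}

/-- Composition of paths. -/
def comp : {u v w : V} → LQPath Q v w → LQPath Q u v → LQPath Q u w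
  | _, _, _, .nil _, q => q
  | _, _, _, .cons e p, q => .cons e (p.comp q)

theorem label_comp : ∀ {u v w : V} (p : LQPath Q v w) (q : LQPath Q u v),
    (p.comp q).label = p.label * q.label
  | _, _, _, .nil _, q => by simp [comp, label]
  | _, _, _, .cons e p, q => by
      simp [comp, label, label_comp p q, mul_assoc]

end LQPath

namespace QuiverRep
variable {K : Type*} [Field K] {V E X : Type*} {Q : LabelledQuiver V E X}

theorem pathMap_comp (ρ : QuiverRep K Q) : ∀ {u v w : V} (p : LQPath Q v w) (q : LQPath Q u v),
    ρ.pathMap (p.comp q) = (ρ.pathMap p).comp (ρ.pathMap q)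
  | _, _, _, .nil _, q => by simp [LQPath.comp, pathMap]
  | _, _, _, .cons e p, q => by
      simp [LQPath.comp, pathMap, pathMap_comp ρ p q, LinearMap.comp_assoc]

/-- The map assigned to a monomial. -/
noncomputable def Tmap (ρ : QuiverRep K Q) (v w : V) (m : FreeMonoid X) :
    ρ.space v →ₗ[K] ρ.space w :=
  letI := Classical.propDecidable (∃ p : LQPath Q v w, p.label = m)
  if h : ∃ p : LQPath Q v w, p.label = m then ρ.pathMap h.choose else 0

theorem Tmap_eq (ρ : QuiverRep K Q) (hρ : ρ.Consistent) {v w : V} {m : FreeMonoid X}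
    (p : LQPath Q v w) (hp : p.label = m) : ρ.Tmap v w m = ρ.pathMap p := by
  have h : ∃ p : LQPath Q v w, p.label = m := ⟨p, hp⟩
  classical
  rw [Tmap]
  rw [dif_pos h]
  exact hρ v w h.choose p (h.choose_spec.trans hp.symm)

theorem realize_eq (ρ : QuiverRep K Q) (v w : V) (f : FreeAlg K X) :
    ρ.realize v w f = Finsupp.sum (f.coeff : FreeMonoid X →₀ K) fun m c => c • ρ.Tmap v w m := rfl

end QuiverRep

section CompSum
variable {K : Type*} [Field K] {iota M N P : Type*} [AddCommGroup M] [AddCommGroup N]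
  [AddCommGroup P] [Module K M] [Module K N] [Module K P]

theorem sum_comp' (s : Finset iota) (F : iota → (N →ₗ[K] P)) (g : M →ₗ[K] N) :
    (∑ i ∈ s, F i).comp g = ∑ i ∈ s, (F i).comp g := by
  ext x; simp [LinearMap.sum_apply]

theorem comp_sum' (h : N →ₗ[K] P) (s : Finset iota) (G : iota → (M →ₗ[K] N)) :
    h.comp (∑ i ∈ s, G i) = ∑ i ∈ s, h.comp (G i) := by
  ext x; simp [LinearMap.sum_apply]

end CompSum

/-- For a consistent representation of `Q` over a field `K` and vertices
`u, v, w`: for all `f ∈ K⟨X⟩_{v,w}` and `g ∈ K⟨X⟩_{u,v}` we have `f·g ∈ K⟨X⟩_{u,w}` and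
`φ_{u,w}(f·g) = φ_{v,w}(f) ∘ φ_{u,v}(g)`. -/
theorem realize_mul {K : Type*} [Field K] {V E X : Type*} {Q : LabelledQuiver V E X}
    (ρ : QuiverRep K Q) (hρ : ρ.Consistent) (u v w : V) (f g : FreeAlg K X)
    (hf : (v, w) ∈ Q.sigmaP f) (hg : (u, v) ∈ Q.sigmaP g) :
    (u, w) ∈ Q.sigmaP (f * g) ∧
      ρ.realize u w (f * g) = (ρ.realize v w f).comp (ρ.realize u v g) := by
  classical
  have hf' : ∀ m ∈ (f.coeff : FreeMonoid X →₀ K).support, ∃ p : LQPath Q v w, p.label = m := by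
    intro m hm
    have := Set.mem_iInter₂.mp hf m hm
    exact this
  have hg' : ∀ m ∈ (g.coeff : FreeMonoid X →₀ K).support, ∃ p : LQPath Q u v, p.label = m := by
    intro m hm
    exact Set.mem_iInter₂.mp hg m hm
  constructor
  · apply Set.mem_iInter₂.mpr
    intro m hm
    have hsub := MonoidAlgebra.support_coeff_mul_subset f g hm
    rw [Finset.mem_mul] at hsub
    obtain ⟨m1, hm1, m2, hm2, hsub⟩ := hsub
    obtain ⟨p, hp⟩ := hf' m1 hm1
    obtain ⟨q, hq⟩ := hg' m2 hm2
    exact ⟨p.comp q, by rw [LQPath.label_comp, hp, hq, hsub]⟩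
  · have h0 : ∀ a : FreeMonoid X, (0 : K) • ρ.Tmap u w a = 0 := fun a => zero_smul _ _
    have h1 : ∀ (a : FreeMonoid X) (b c : K),
        (b + c) • ρ.Tmap u w a = b • ρ.Tmap u w a + c • ρ.Tmap u w a :=
      fun a b c => add_smul _ _ _
    have lhs : ρ.realize u w (f * g) =
        Finsupp.sum f.coeff fun m1 c1 => Finsupp.sum g.coeff fun m2 c2 =>
          (c1 * c2) • ρ.Tmap u w (m1 * m2) := by
      rw [ρ.realize_eq, MonoidAlgebra.mul_def, MonoidAlgebra.coeff_finsuppSum, Finsupp.sum_sum_index h0 h1]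
      refine Finsupp.sum_congr fun m1 _ => ?_
      rw [MonoidAlgebra.coeff_finsuppSum, Finsupp.sum_sum_index h0 h1]
      refine Finsupp.sum_congr fun m2 _ => ?_
      rw [MonoidAlgebra.coeff_single, Finsupp.sum_single_index (h0 _)]
    rw [lhs, ρ.realize_eq v w, ρ.realize_eq u v, Finsupp.sum, Finsupp.sum, Finsupp.sum,
      sum_comp']
    refine Finset.sum_congr rfl fun m1 hm1 => ?_
    rw [Finsupp.sum, comp_sum']
    refine Finset.sum_congr rfl fun m2 hm2 => ?_
    obtain ⟨p, hp⟩ := hf' m1 hm1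
    obtain ⟨q, hq⟩ := hg' m2 hm2
    rw [ρ.Tmap_eq hρ p hp, ρ.Tmap_eq hρ q hq,
      ρ.Tmap_eq hρ (p.comp q) (by rw [LQPath.label_comp, hp, hq]), ρ.pathMap_comp]
    rw [LinearMap.smul_comp, LinearMap.comp_smul, smul_smul]
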